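/- If Z is a set of nodes in a directed acyclic graph G satisfying the back-door criterion relative to an ordered pair (D, Y) — i.e., no node of Z is a descendant of D, and Z blocks every path from D to Y that contains an arrow into D — then Z d-separates D from Y in the graph obtained from G by removing all edges emanating from D. -/

import Mathlib

/-- A walk in the skeleton of the directed graph `E`: a list of vertices in which
consecutive vertices are joined by an edge in one direction or the other,
with no repeated vertices, going from `D` to `Y`. -/
def IsPathBetween {V : Type*} (E : V → V → Prop) (D Y : V) (p : List V) : Prop :=
  p.Chain' (fun a b => E a b ∨ E b a) ∧ p.Nodup ∧ p.head? = some D ∧ p.getLast? = some Y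

/-- The path `p` starts with an arrow pointing into its first vertex. -/
def ArrowIntoHead {V : Type*} (E : V → V → Prop) (p : List V) : Prop :=
  ∃ a b rest, p = a :: b :: rest ∧ E b a

/-- The path `p` is blocked by the conditioning set `Z` (Pearl's d-separation
criterion for a single path): some interior vertex `b` is either a collider
neither in `Z` nor with a descendant in `Z`, or a non-collider belonging to `Z`. -/
def Blocked {V : Type*} (E : V → V → Prop) (Z : Set V) (p : List V) : Prop :=
  ∃ (i : ℕ) (h : i + 2 < p.length),
    ((E (p.get ⟨i, by omega⟩) (p.get ⟨i + 1, by omega⟩) ∧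
        E (p.get ⟨i + 2, h⟩) (p.get ⟨i + 1, by omega⟩)) ∧
      p.get ⟨i + 1, by omega⟩ ∉ Z ∧
      ∀ w ∈ Z, ¬ Relation.ReflTransGen E (p.get ⟨i + 1, by omega⟩) w) ∨
    (¬ (E (p.get ⟨i, by omega⟩) (p.get ⟨i + 1, by omega⟩) ∧
        E (p.get ⟨i + 2, h⟩) (p.get ⟨i + 1, by omega⟩)) ∧
      p.get ⟨i + 1, by omega⟩ ∈ Z)

/-- The back-door criterion of `Z` relative to the ordered pair `(D, Y)`:
no node of `Z` is a descendant of `D`, and `Z` blocks every path from `D` to `Y`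
that contains an arrow into `D`. -/
def BackDoor {V : Type*} (E : V → V → Prop) (D Y : V) (Z : Set V) : Prop :=
  (∀ z ∈ Z, ¬ Relation.ReflTransGen E D z) ∧
  ∀ p : List V, IsPathBetween E D Y p → ArrowIntoHead E p → Blocked E Z p

theorem stmt15 {V : Type*} [Fintype V] [DecidableEq V]
    (E : V → V → Prop) (hacyclic : ∀ v, ¬ Relation.TransGen E v v)
    (D Y : V) (Z : Set V) (hDY : D ≠ Y) (hDZ : D ∉ Z) (hYZ : Y ∉ Z)
    (hbd : BackDoor E D Y Z) :
    ∀ p : List V, IsPathBetween (fun a b => E a b ∧ a ≠ D) D Y p →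
      Blocked (fun a b => E a b ∧ a ≠ D) Z p := by
  intro p hp
  obtain ⟨hchain, hnodup, hhead, hlast⟩ := hp
  -- p = D :: b :: rest
  obtain ⟨t, rfl⟩ : ∃ t, p = D :: t := by
    cases p with
    | nil => simp at hhead
    | cons a t =>
        simp only [List.head?_cons, Option.some.injEq] at hhead
        exact ⟨t, by rw [hhead]⟩
  obtain ⟨b, rest, rfl⟩ : ∃ b rest, t = b :: rest := by
    cases t with
    | nil => simp at hlast; exact absurd hlast hDY
    | cons b rest => exact ⟨b, rest, rfl⟩
  set p := D :: b :: rest with hp_def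
  have hbD : E b D ∧ b ≠ D := by
    have := (List.isChain_cons_cons.mp hchain).1
    rcases this with h | h
    · exact absurd h.2 (by simp)
    · exact h
  have hpathE : IsPathBetween E D Y p :=
    ⟨hchain.imp (fun a c h => h.imp And.left And.left), hnodup, hhead, hlast⟩
  have harrow : ArrowIntoHead E p := ⟨D, b, rest, rfl, hbD.1⟩
  obtain ⟨i, h, hcase⟩ := hbd.2 p hpathE harrow
  refine ⟨i, h, ?_⟩
  have hget0 : p.get ⟨0, by omega⟩ = D := rfl
  rcases hcase with ⟨⟨h1, h2⟩, hmZ, hdes⟩ | ⟨hnc, hmZ⟩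
  · -- collider case
    by_cases hi : i = 0
    · exfalso
      subst hi
      have hb1 : p.get ⟨1, by omega⟩ = b := rfl
      rw [hget0, hb1] at h1
      exact hacyclic D (Relation.TransGen.head h1 (Relation.TransGen.single hbD.1))
    · left
      have hiD : p.get ⟨i, by omega⟩ ≠ D := by
        intro hEq
        have : (⟨i, by omega⟩ : Fin p.length) = ⟨0, by omega⟩ :=
          hnodup.get_inj_iff.mp (hEq.trans hget0.symm)
        exact hi (by simpa using congrArg Fin.val this)
      have hi2D : p.get ⟨i + 2, h⟩ ≠ D := by
        intro hEq
        have : (⟨i + 2, h⟩ : Fin p.length) = ⟨0, by omega⟩ :=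
          hnodup.get_inj_iff.mp (hEq.trans hget0.symm)
        exact absurd (congrArg Fin.val this) (by simp)
      refine ⟨⟨⟨h1, hiD⟩, ⟨h2, hi2D⟩⟩, hmZ, ?_⟩
      intro w hw hrt
      exact hdes w hw (Relation.ReflTransGen.mono (r := fun a b => E a b ∧ a ≠ D) (p := E) (fun a c hac => hac.1) _ _ hrt)
  · right
    exact ⟨fun ⟨ha, hb2⟩ => hnc ⟨ha.1, hb2.1⟩, hmZ⟩
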